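/- For every natural number k ≥ 2 there exists a unitary 4 × 4 complex matrix W (an element of the unitary group of Matrix (Fin 4) (Fin 4) ℂ) with the following property. Let γ_k : (Fin k → Fin 4) → ℂ be the GHZ amplitude function with γ_k(z) = (√2)⁻¹ if z is constantly 0 or constantly 1, and γ_k(z) = 0 otherwise. Then the vector φ = W^{⊗k} γ_k, defined by φ(z) = ∑_{w : Fin k → Fin 4} (∏_{i : Fin k} W (z i) (w i)) · γ_k(w), satisfies φ(z) = 0 for every constant string z (every z such that z i = z j for all i, j). In other words, W^{⊗k} maps the k-partite GHZ state over |0̂⟩, |1̂⟩ to a superposition supported entirely on non-constant strings. -/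
import Mathlib


/-- Amplitude function of the `k`-partite GHZ state over `|0̂⟩, |1̂⟩`
(basis labels in `Fin 4`): amplitude `(√2)⁻¹` on the all-`0` and all-`1`
strings, and `0` elsewhere. -/
noncomputable def ghzAmp (k : ℕ) (z : Fin k → Fin 4) : ℂ :=
  if (∀ i, z i = 0) ∨ (∀ i, z i = 1) then (Real.sqrt 2 : ℂ)⁻¹ else 0

lemma key (k : ℕ) (hk : 2 ≤ k) (W : Matrix (Fin 4) (Fin 4) ℂ)
    (h0 : ∀ v : Fin 4, W v 0 ^ k + W v 1 ^ k = 0) (z : Fin k → Fin 4)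
    (hz : ∀ i j, z i = z j) :
    ∑ w : Fin k → Fin 4, (∏ i, W (z i) (w i)) * ghzAmp k w = 0 := by
  have hk0 : k ≠ 0 := by omega
  set w₀ : Fin k → Fin 4 := fun _ => 0 with hw₀
  set w₁ : Fin k → Fin 4 := fun _ => 1 with hw₁
  have hne : w₀ ≠ w₁ := by
    intro h
    have := congrFun h ⟨0, by omega⟩
    simp [hw₀, hw₁] at this
  have hsub : ∑ w : Fin k → Fin 4, (∏ i, W (z i) (w i)) * ghzAmp k w
      = ∑ w ∈ ({w₀, w₁} : Finset (Fin k → Fin 4)), (∏ i, W (z i) (w i)) * ghzAmp k w := by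
    symm
    apply Finset.sum_subset (Finset.subset_univ _)
    intro w _ hw
    have : ¬ ((∀ i, w i = 0) ∨ (∀ i, w i = 1)) := by
      rintro (h | h)
      · exact hw (by simp [Finset.mem_insert]; left; funext i; exact h i)
      · exact hw (by simp [Finset.mem_insert]; right; funext i; exact h i)
    simp [ghzAmp, this]
  rw [hsub, Finset.sum_pair hne]
  have hg0 : ghzAmp k w₀ = (Real.sqrt 2 : ℂ)⁻¹ := by simp [ghzAmp, hw₀]
  have hg1 : ghzAmp k w₁ = (Real.sqrt 2 : ℂ)⁻¹ := by simp [ghzAmp, hw₁]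
  have hp0 : (∏ i, W (z i) (w₀ i)) = W (z ⟨0, by omega⟩) 0 ^ k := by
    rw [show (∏ i, W (z i) (w₀ i)) = ∏ _i : Fin k, W (z ⟨0, by omega⟩) 0 from
      Finset.prod_congr rfl (fun i _ => by rw [hz i ⟨0, by omega⟩])]
    simp
  have hp1 : (∏ i, W (z i) (w₁ i)) = W (z ⟨0, by omega⟩) 1 ^ k := by
    rw [show (∏ i, W (z i) (w₁ i)) = ∏ _i : Fin k, W (z ⟨0, by omega⟩) 1 from
      Finset.prod_congr rfl (fun i _ => by rw [hz i ⟨0, by omega⟩])]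
    simp
  rw [hg0, hg1, hp0, hp1, ← add_mul, h0]
  ring


open Complex in
lemma zeta_exists (k : ℕ) (hk0 : k ≠ 0) :
    ∃ ζ : ℂ, ζ * (starRingEnd ℂ) ζ = 1 ∧ ζ ^ k = -1 ∧
      ζ + (starRingEnd ℂ) ζ = 2 * (Real.cos (Real.pi / k) : ℂ) := by
  have hkC : (k : ℂ) ≠ 0 := Nat.cast_ne_zero.2 hk0
  set θ : ℝ := Real.pi / k with hθ
  refine ⟨(Real.cos θ : ℂ) + (Real.sin θ : ℂ) * I, ?_, ?_, ?_⟩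
  · rw [map_add, map_mul, Complex.conj_ofReal, Complex.conj_ofReal, Complex.conj_I]
    have h1 : (Real.sin θ : ℂ) ^ 2 + (Real.cos θ : ℂ) ^ 2 = 1 := by
      rw [← Complex.ofReal_pow, ← Complex.ofReal_pow, ← Complex.ofReal_add,
        Real.sin_sq_add_cos_sq, Complex.ofReal_one]
    linear_combination h1 - (Real.sin θ : ℂ)^2 * Complex.I_sq
  · have hζexp : (Real.cos θ : ℂ) + (Real.sin θ : ℂ) * I = Complex.exp (θ * I) := by
      rw [Complex.exp_mul_I, Complex.ofReal_cos, Complex.ofReal_sin]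
    rw [hζexp, ← Complex.exp_nat_mul]
    have h : (k : ℂ) * ((θ : ℂ) * I) = (Real.pi : ℂ) * I := by
      rw [hθ]; push_cast; field_simp
    rw [h, Complex.exp_pi_mul_I]
  · rw [map_add, map_mul, Complex.conj_ofReal, Complex.conj_ofReal, Complex.conj_I]
    ring

open Complex in
lemma oddW (k : ℕ) (hk : 2 ≤ k) (hko : Odd k) :
    ∃ W : Matrix (Fin 4) (Fin 4) ℂ, W ∈ Matrix.unitaryGroup (Fin 4) ℂ ∧
      ∀ v : Fin 4, W v 0 ^ k + W v 1 ^ k = 0 := by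
  have hk0 : k ≠ 0 := by omega
  obtain ⟨ζ, hζζ, hζk, hcζ⟩ := zeta_exists k hk0
  obtain ⟨c, x, y, hceq, hx, hy⟩ :
      ∃ c x y : ℝ, c = Real.cos (Real.pi / k) ∧
        (x:ℂ)^2 * (2 + 2*(c:ℂ)) = 1 ∧ (y:ℂ)^2 = 2*(c:ℂ)*(x:ℂ)^2 := by
    set c : ℝ := Real.cos (Real.pi / k) with hcdef
    have hc0 : 0 ≤ c := by
      apply Real.cos_nonneg_of_mem_Icc
      have hk2 : (2:ℝ) ≤ (k:ℝ) := by exact_mod_cast hk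
      have hpi := Real.pi_pos
      constructor
      · have : 0 ≤ Real.pi / k := by positivity
        linarith
      · exact div_le_div_of_nonneg_left (le_of_lt hpi) (by norm_num) hk2
    have h2c : (0:ℝ) < 2 + 2 * c := by linarith
    refine ⟨c, Real.sqrt ((2 + 2*c)⁻¹), Real.sqrt (2*c) * Real.sqrt ((2 + 2*c)⁻¹), rfl, ?_, ?_⟩
    · have hxR : (Real.sqrt ((2 + 2*c)⁻¹) : ℝ)^2 * (2 + 2*c) = 1 := by
        rw [Real.sq_sqrt (by positivity)]; field_simp
      exact_mod_cast hxR
    · have hyR : ((Real.sqrt (2*c) * Real.sqrt ((2 + 2*c)⁻¹)) : ℝ)^2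
          = 2 * c * (Real.sqrt ((2 + 2*c)⁻¹))^2 := by
        rw [mul_pow, Real.sq_sqrt (by positivity)]
      exact_mod_cast hyR
  rw [← hceq] at hcζ
  have hζ'k : ((starRingEnd ℂ) ζ) ^ k = -1 := by
    rw [← map_pow, hζk]; simp
  refine ⟨!![(x:ℂ) * ζ, (x:ℂ), (x:ℂ)*(y:ℂ)*(ζ+1), 0;
             (x:ℂ) * ((starRingEnd ℂ) ζ), (x:ℂ), -((x:ℂ)*(y:ℂ)*(1+(starRingEnd ℂ) ζ)), 0;
             -(y:ℂ), (y:ℂ), (x:ℂ)^2*((starRingEnd ℂ) ζ - ζ), 0;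
             0, 0, 0, 1], ?_, ?_⟩
  · rw [Matrix.mem_unitaryGroup_iff']
    ext i j
    fin_cases i <;> fin_cases j <;>
      simp [Matrix.mul_apply, Fin.sum_univ_four, Matrix.one_apply, Matrix.star_apply,
        Complex.conj_ofReal, map_mul, Matrix.vecHead, Matrix.vecTail]
    all_goals try ring
    all_goals try linear_combination 2*(x:ℂ)^2*hζζ + hy + hx
    all_goals try linear_combination hy + hx
    all_goals try linear_combination (x:ℂ)^2*hcζ - hy
    all_goals try linear_combination -((x:ℂ)^2*hcζ) + hy
    all_goals try linear_combination ((2*(x:ℂ)^2*(ζ*((starRingEnd ℂ) ζ)+ζ+((starRingEnd ℂ) ζ)+1))*hy + (4*((c:ℂ)+1)*(x:ℂ)^4)*hζζ - ((x:ℂ)^4*(ζ+((starRingEnd ℂ) ζ)-2*(c:ℂ)))*hcζ + ((x:ℂ)^2*(2+2*(c:ℂ))+1)*hx)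
    all_goals linear_combination (x:ℂ)^2*hcζ + hy
  · intro v
    have hyk : ((-(y:ℂ))) ^ k = -(y:ℂ) ^ k := hko.neg_pow _
    fin_cases v <;>
      simp [mul_pow, hζk, hζ'k, hyk, zero_pow hk0, Matrix.vecHead, Matrix.vecTail] <;>
      ring

open Complex in
lemma evenW (k : ℕ) (hk : 2 ≤ k) (hke : Even k) :
    ∃ W : Matrix (Fin 4) (Fin 4) ℂ, W ∈ Matrix.unitaryGroup (Fin 4) ℂ ∧
      ∀ v : Fin 4, W v 0 ^ k + W v 1 ^ k = 0 := by
  have hk0 : k ≠ 0 := by omega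
  obtain ⟨ζ, hζζ, hζk, -⟩ := zeta_exists k hk0
  obtain ⟨r, hr2⟩ : ∃ r : ℝ, (r : ℂ) ^ 2 * 2 = 1 := by
    refine ⟨(Real.sqrt 2)⁻¹, ?_⟩
    have h2 : ((Real.sqrt 2)⁻¹ : ℝ) ^ 2 * 2 = 1 := by
      rw [inv_pow, Real.sq_sqrt (by norm_num : (0:ℝ) ≤ 2)]; norm_num
    exact_mod_cast h2
  refine ⟨!![ζ * r, r, 0, 0; ζ * r, -r, 0, 0; 0, 0, 1, 0; 0, 0, 0, 1], ?_, ?_⟩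
  · rw [Matrix.mem_unitaryGroup_iff']
    ext i j
    fin_cases i <;> fin_cases j <;>
      simp [Matrix.mul_apply, Fin.sum_univ_four, Matrix.one_apply, Matrix.star_apply,
        Complex.conj_ofReal, map_mul, Matrix.vecHead, Matrix.vecTail]
    all_goals try ring
    all_goals try linear_combination 2*(r:ℂ)^2 * hζζ + hr2
    all_goals try linear_combination (r:ℂ)^2 * hζζ + (1/2 : ℂ) * hr2
    all_goals try linear_combination hr2
    all_goals try linear_combination -((r:ℂ)^2 * hζζ) - (1/2 : ℂ) * hr2
    all_goals linear_combination ((starRingEnd ℂ) ζ) * (r:ℂ)^2 * hζζ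
  · intro v
    have hrk : ((-r : ℂ)) ^ k = (r:ℂ) ^ k := hke.neg_pow _
    fin_cases v <;>
      simp [mul_pow, hζk, hrk, zero_pow hk0, Matrix.vecHead, Matrix.vecTail] <;> ring

/-- For every `k ≥ 2` there is a unitary `W` on `ℂ⁴` such that `W^{⊗k}` maps the
`k`-partite GHZ state to a superposition supported entirely on non-constant strings. -/
theorem stmt1 (k : ℕ) (hk : 2 ≤ k) :
    ∃ W : Matrix.unitaryGroup (Fin 4) ℂ,
      ∀ z : Fin k → Fin 4, (∀ i j, z i = z j) →
        (∑ w : Fin k → Fin 4,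
            (∏ i, (W : Matrix (Fin 4) (Fin 4) ℂ) (z i) (w i)) * ghzAmp k w) = 0 := by
  rcases Nat.even_or_odd k with he | ho
  · obtain ⟨W, hW, h0⟩ := evenW k hk he
    exact ⟨⟨W, hW⟩, fun z hz => key k hk W h0 z hz⟩
  · obtain ⟨W, hW, h0⟩ := oddW k hk ho
    exact ⟨⟨W, hW⟩, fun z hz => key k hk W h0 z hz⟩
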